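/- Under the block-partition setup, for every integer p ≥ 1 the series Σ_{j≥0} |b_j + b_{j+1} + … + b_{j+p−1}| diverges, where b_j := ((−1)ⁿ/‖f_n‖₁)·a_n·f_n(j) for the unique n with j ∈ P_n. -/

import Mathlib

open Filter

lemma my_cover (F : ℕ → ℝ) (hF : ∀ k, 0 ≤ F k) (l r p : ℕ) (hp : 1 ≤ p) (hlr : l + p ≤ r) :
    ∑ k ∈ Finset.Ico l r, F k ≤ ∑ j ∈ Finset.Ico l (r - p + 1), ∑ i ∈ Finset.range p, F (j + i) := by
  rw [← Finset.sum_product']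
  have hinj : Set.InjOn (fun k => (min k (r - p), k - min k (r - p)))
      (Finset.Ico l r : Set ℕ) := by
    intro x _ y _ h
    have h1 : min x (r-p) = min y (r-p) := congrArg Prod.fst h
    have h2 : x - min x (r-p) = y - min y (r-p) := congrArg Prod.snd h
    have hx : min x (r-p) + (x - min x (r-p)) = x := Nat.add_sub_cancel' (min_le_left _ _)
    have hy : min y (r-p) + (y - min y (r-p)) = y := Nat.add_sub_cancel' (min_le_left _ _)
    omega
  calc ∑ k ∈ Finset.Ico l r, F k
      = ∑ x ∈ (Finset.Ico l r).image (fun k => (min k (r - p), k - min k (r - p))),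
          F (x.1 + x.2) := by
        rw [Finset.sum_image (fun x hx y hy h => hinj hx hy h)]
        refine Finset.sum_congr rfl fun k _ => ?_
        congr 1
        exact (Nat.add_sub_cancel' (min_le_left _ _)).symm
    _ ≤ ∑ x ∈ Finset.Ico l (r - p + 1) ×ˢ Finset.range p, F (x.1 + x.2) := by
        refine Finset.sum_le_sum_of_subset_of_nonneg ?_ (fun _ _ _ => hF _)
        intro x hx
        simp only [Finset.mem_image, Finset.mem_Ico] at hx
        obtain ⟨k, ⟨hkl, hkr⟩, rfl⟩ := hx
        simp only [Finset.mem_product, Finset.mem_Ico, Finset.mem_range]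
        omega

lemma my_tele (h : ℕ → ℝ) (A : ℕ → ℕ) (hA : Monotone A) (M : ℕ) :
    ∀ N, M ≤ N → ∑ n ∈ Finset.Ico M N, ∑ j ∈ Finset.Ico (A n) (A (n+1)), h j
      = ∑ j ∈ Finset.Ico (A M) (A N), h j := by
  intro N
  induction N with
  | zero => intro hMN; simp [Nat.le_zero.mp hMN]
  | succ N ih =>
    intro hMN
    rcases Nat.lt_or_ge M (N+1) with hlt | hge
    · have hMN' : M ≤ N := by omega
      rw [Finset.sum_Ico_succ_top hMN', ih hMN',
        Finset.sum_Ico_consecutive _ (hA hMN') (hA (Nat.le_succ N))]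
    · have : M = N + 1 := by omega
      simp [this]

theorem blockPartition_window_sums_diverge
    (A : ℕ → ℕ) (hA0 : A 0 = 0) (hAmono : StrictMono A)
    (hsize : ∀ n : ℕ, 1 ≤ n → A (n + 1) - A n < A (n + 2) - A (n + 1))
    (f : ℕ → ℕ → ℝ) (hf0 : ∀ n j, 0 ≤ f n j)
    (hfsupp : ∀ n j, (j < A n ∨ A (n + 1) ≤ j) → f n j = 0)
    (hfpos : ∀ n, 0 < ∑ j ∈ Finset.Ico (A n) (A (n + 1)), f n j)
    (a : ℕ → ℝ) (ha : ∀ n, 0 < a n)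
    (hconv : ∃ L : ℝ, Tendsto (fun N => ∑ n ∈ Finset.range N, (-1 : ℝ) ^ n * a n)
        atTop (nhds L))
    (hdiv : ¬ Summable a)
    (b : ℕ → ℝ)
    (hb : ∀ n j, A n ≤ j → j < A (n + 1) →
      b j = ((-1 : ℝ) ^ n / ∑ i ∈ Finset.Ico (A n) (A (n + 1)), f n i) * a n * f n j) :
    ∀ p : ℕ, 1 ≤ p → ¬ Summable (fun j : ℕ => |∑ i ∈ Finset.range p, b (j + i)|) := by
  intro p hp hsum
  set g : ℕ → ℝ := fun j => |∑ i ∈ Finset.range p, b (j + i)| with hg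
  have hg0 : ∀ j, 0 ≤ g j := fun j => abs_nonneg _
  -- block sizes grow
  have hbig : ∀ m : ℕ, m ≤ A (m + 2) - A (m + 1) := by
    intro m
    induction m with
    | zero => omega
    | succ m ih =>
      have h : A (m + 2) - A (m + 1) < A (m + 3) - A (m + 2) := hsize (m + 1) (by omega)
      show m + 1 ≤ A (m + 3) - A (m + 2)
      omega
  have hsz : ∀ n, p + 1 ≤ n → A n + p ≤ A (n + 1) := by
    intro n hn
    obtain ⟨m, rfl⟩ : ∃ m, n = m + 2 := ⟨n - 2, by omega⟩
    have h1 : m + 1 ≤ A (m + 3) - A (m + 2) := hbig (m + 1)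
    have h2 : A (m + 2) ≤ A (m + 3) := hAmono.monotone (by omega)
    show A (m + 2) + p ≤ A (m + 3)
    omega
  -- per-block estimate
  have hblock : ∀ n, p + 1 ≤ n →
      a n ≤ ∑ j ∈ Finset.Ico (A n) (A (n + 1) - p + 1), g j := by
    intro n hn
    set l := A n
    set r := A (n + 1)
    have hlr : l + p ≤ r := hsz n hn
    set S := ∑ i ∈ Finset.Ico l r, f n i with hS
    have hSpos : 0 < S := hfpos n
    have hwin : ∀ j ∈ Finset.Ico l (r - p + 1),
        g j = a n / S * ∑ i ∈ Finset.range p, f n (j + i) := by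
      intro j hj
      simp only [Finset.mem_Ico] at hj
      have hbj : ∀ i ∈ Finset.range p, b (j + i) = ((-1 : ℝ) ^ n / S) * a n * f n (j + i) := by
        intro i hi
        simp only [Finset.mem_range] at hi
        exact hb n (j + i) (by omega) (by omega)
      rw [hg]
      simp only
      rw [Finset.sum_congr rfl hbj, ← Finset.mul_sum, abs_mul, abs_of_nonneg
        (Finset.sum_nonneg fun i _ => hf0 n (j + i)), abs_mul, abs_div, abs_pow, abs_neg,
        abs_one, one_pow, abs_of_pos hSpos, abs_of_pos (ha n)]
      ring
    rw [Finset.sum_congr rfl hwin, ← Finset.mul_sum]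
    have hcov := my_cover (f n) (hf0 n) l r p hp hlr
    calc a n = a n / S * S := by field_simp
      _ ≤ a n / S * ∑ j ∈ Finset.Ico l (r - p + 1), ∑ i ∈ Finset.range p, f n (j + i) := by
          apply mul_le_mul_of_nonneg_left hcov (div_nonneg (ha n).le hSpos.le)
  -- derive summability of a
  apply hdiv
  set N0 := p + 1 with hN0
  refine summable_of_sum_range_le (fun n => (ha n).le)
    (c := (∑ n ∈ Finset.range N0, a n) + ∑' j, g j) fun N => ?_
  have htsum0 : 0 ≤ ∑' j, g j := tsum_nonneg hg0
  rcases le_or_gt N N0 with hN | hN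
  · calc ∑ n ∈ Finset.range N, a n ≤ ∑ n ∈ Finset.range N0, a n :=
        Finset.sum_le_sum_of_subset_of_nonneg (Finset.range_subset_range.mpr hN)
          (fun n _ _ => (ha n).le)
      _ ≤ _ := le_add_of_nonneg_right htsum0
  · have hsplit : ∑ n ∈ Finset.range N, a n
        = ∑ n ∈ Finset.range N0, a n + ∑ n ∈ Finset.Ico N0 N, a n := by
      rw [Finset.range_eq_Ico, Finset.range_eq_Ico]
      exact (Finset.sum_Ico_consecutive a (Nat.zero_le _) hN.le).symm
    rw [hsplit]
    refine add_le_add_right ?_ _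
    calc ∑ n ∈ Finset.Ico N0 N, a n
        ≤ ∑ n ∈ Finset.Ico N0 N, ∑ j ∈ Finset.Ico (A n) (A (n + 1) - p + 1), g j := by
          refine Finset.sum_le_sum fun n hn => ?_
          simp only [Finset.mem_Ico] at hn
          exact hblock n hn.1
      _ ≤ ∑ n ∈ Finset.Ico N0 N, ∑ j ∈ Finset.Ico (A n) (A (n + 1)), g j := by
          refine Finset.sum_le_sum fun n hn => ?_
          simp only [Finset.mem_Ico] at hn
          refine Finset.sum_le_sum_of_subset_of_nonneg ?_ (fun j _ _ => hg0 j)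
          apply Finset.Ico_subset_Ico le_rfl
          have := hsz n hn.1
          omega
      _ = ∑ j ∈ Finset.Ico (A N0) (A N), g j :=
          my_tele g A hAmono.monotone N0 N hN.le
      _ ≤ ∑' j, g j := Summable.sum_le_tsum _ (fun j _ => hg0 j) hsum
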